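/- For the uniform distribution on N ≥ 3 points, the difference between Tsallis entropy and Tsallis extropy, D(α) = (2N^{α-1} - N^α - 1 + (N-1)^α)/((α-1) N^{α-1}), is positive for 0 < α < 2 (α ≠ 1) and negative for α > 2. -/

import Mathlib

open Set Real

noncomputable def Kfun (α : ℝ) : ℝ → ℝ := fun y => (1 - y) ^ α - y ^ α + 2 * y - 1

lemma Kfun_hasDerivAt (α : ℝ) {y : ℝ} (hy : y ∈ Set.Ioo (0:ℝ) (1/2)) :
    HasDerivAt (Kfun α) (2 - α * (1 - y) ^ (α - 1) - α * y ^ (α - 1)) y := by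
  obtain ⟨hy0, hy1⟩ := hy
  have h1 : (1:ℝ) - y ≠ 0 := by nlinarith
  have h2 : HasDerivAt (fun y : ℝ => (1 - y) ^ α) ((-1) * α * (1 - y) ^ (α - 1)) y :=
    ((hasDerivAt_id y).const_sub 1).rpow_const (Or.inl h1)
  have h3 : HasDerivAt (fun y : ℝ => y ^ α) (1 * α * y ^ (α - 1)) y :=
    (hasDerivAt_id y).rpow_const (Or.inl hy0.ne')
  have h4 : HasDerivAt (fun y : ℝ => 2 * y - 1) 2 y := by
    simpa using ((hasDerivAt_id y).const_mul (2:ℝ)).sub_const 1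
  have := (h2.sub h3).add h4
  have hf : Kfun α = ((fun y : ℝ => (1 - y) ^ α) - fun y : ℝ => y ^ α) + fun y : ℝ => 2 * y - 1 := by
    ext x; simp only [Kfun, Pi.add_apply, Pi.sub_apply]; ring
  rw [hf]
  refine this.congr_deriv ?_
  ring

lemma Kfun_deriv_eq (α : ℝ) {y : ℝ} (hy : y ∈ Set.Ioo (0:ℝ) (1/2)) :
    deriv (Kfun α) y = 2 - α * (1 - y) ^ (α - 1) - α * y ^ (α - 1) :=
  (Kfun_hasDerivAt α hy).deriv

lemma Kfun_deriv2_eq (α : ℝ) {y : ℝ} (hy : y ∈ Set.Ioo (0:ℝ) (1/2)) :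
    deriv (deriv (Kfun α)) y
      = α * (α - 1) * ((1 - y) ^ (α - 2) - y ^ (α - 2)) := by
  obtain ⟨hy0, hy1⟩ := hy
  have h1 : (1:ℝ) - y ≠ 0 := by nlinarith
  have h2 : HasDerivAt (fun y : ℝ => 2 - α * (1 - y) ^ (α - 1) - α * y ^ (α - 1))
      (α * (α - 1) * ((1 - y) ^ (α - 2) - y ^ (α - 2))) y := by
    have ha : HasDerivAt (fun y : ℝ => (1 - y) ^ (α - 1)) ((-1) * (α - 1) * (1 - y) ^ (α - 1 - 1)) y :=
      ((hasDerivAt_id y).const_sub 1).rpow_const (Or.inl h1)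
    have hb : HasDerivAt (fun y : ℝ => y ^ (α - 1)) (1 * (α - 1) * y ^ (α - 1 - 1)) y :=
      (hasDerivAt_id y).rpow_const (Or.inl hy0.ne')
    have := ((ha.const_mul α).const_sub 2).sub (hb.const_mul α)
    refine this.congr_deriv ?_
    have : α - 1 - 1 = α - 2 := by ring
    rw [this]; ring
  have heq : deriv (Kfun α) =ᶠ[nhds y] fun y => 2 - α * (1 - y) ^ (α - 1) - α * y ^ (α - 1) := by
    filter_upwards [Ioo_mem_nhds hy0 hy1] with z hz
    exact Kfun_deriv_eq α hz
  rw [heq.deriv_eq]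
  exact h2.deriv

lemma Kfun_continuousOn (α : ℝ) (hα : 0 < α) :
    ContinuousOn (Kfun α) (Set.Icc (0:ℝ) (1/2)) := by
  have h1 : ContinuousOn (fun y : ℝ => (1 - y) ^ α) (Set.Icc (0:ℝ) (1/2)) := by
    intro x hx
    apply ContinuousAt.continuousWithinAt
    have : (1:ℝ) - x ≠ 0 := by rcases hx with ⟨h0, h2⟩; nlinarith
    exact (Real.continuousAt_rpow_const _ _ (Or.inl this)).comp
      (continuousAt_const.sub continuousAt_id)
  have h2 : ContinuousOn (fun y : ℝ => y ^ α) (Set.Icc (0:ℝ) (1/2)) := by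
    intro x _
    exact (Real.continuousAt_rpow_const _ _ (Or.inr hα.le)).continuousWithinAt
  exact ((h1.sub h2).add ((continuousOn_const.mul continuousOn_id))).sub continuousOn_const

lemma Kfun_zero_left (α : ℝ) (hα : 0 < α) : Kfun α 0 = 0 := by
  simp [Kfun, Real.zero_rpow hα.ne', Real.one_rpow]

lemma Kfun_zero_right (α : ℝ) : Kfun α (1/2) = 0 := by
  simp [Kfun]
  norm_num

-- membership of 1/N as convex combination of 0 and 1/2
lemma sign_Kfun (α : ℝ) (hα : 0 < α) {y : ℝ} (hy : y ∈ Set.Ioo (0:ℝ) (1/2)) :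
    (α < 1 → Kfun α y < 0) ∧ (1 < α → α < 2 → 0 < Kfun α y) ∧ (2 < α → Kfun α y < 0) := by
  obtain ⟨hy0, hy1⟩ := hy
  -- write y as convex combination of 0 and 1/2
  set t : ℝ := 1 - 2 * y with ht
  have ht0 : 0 < t := by simp [ht]; linarith
  have ht1 : 1 - t = 2 * y := by ring
  have ht1' : (0:ℝ) < 1 - t := by rw [ht1]; linarith
  have hcomb : t • (0:ℝ) + (1 - t) • (1/2 : ℝ) = y := by
    simp [smul_eq_mul, ht1]; ring
  have h0mem : (0:ℝ) ∈ Set.Icc (0:ℝ) (1/2) := by constructor <;> norm_num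
  have h2mem : (1/2:ℝ) ∈ Set.Icc (0:ℝ) (1/2) := by constructor <;> norm_num
  have hne : (0:ℝ) ≠ (1/2 : ℝ) := by norm_num
  have hsum : t + (1 - t) = 1 := by ring
  have key_pos : (∀ x ∈ interior (Set.Icc (0:ℝ) (1/2)), 0 < deriv^[2] (Kfun α) x) →
      Kfun α y < 0 := by
    intro h
    have hconv : StrictConvexOn ℝ (Set.Icc (0:ℝ) (1/2)) (Kfun α) :=
      strictConvexOn_of_deriv2_pos (convex_Icc _ _) (Kfun_continuousOn α hα) h
    have := hconv.2 h0mem h2mem hne ht0 ht1' hsum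
    rw [hcomb, Kfun_zero_left α hα, Kfun_zero_right α] at this
    simpa using this
  have key_neg : (∀ x ∈ interior (Set.Icc (0:ℝ) (1/2)), deriv^[2] (Kfun α) x < 0) →
      0 < Kfun α y := by
    intro h
    have hconc : StrictConcaveOn ℝ (Set.Icc (0:ℝ) (1/2)) (Kfun α) :=
      strictConcaveOn_of_deriv2_neg (convex_Icc _ _) (Kfun_continuousOn α hα) h
    have := hconc.2 h0mem h2mem hne ht0 ht1' hsum
    rw [hcomb, Kfun_zero_left α hα, Kfun_zero_right α] at this
    simpa using this
  have hint : interior (Set.Icc (0:ℝ) (1/2)) = Set.Ioo (0:ℝ) (1/2) := interior_Icc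
  refine ⟨fun h1 => ?_, fun h1 h2 => ?_, fun h2 => ?_⟩
  · apply key_pos
    intro x hx
    rw [hint] at hx
    rw [Function.iterate_succ, Function.iterate_one, Function.comp_apply,
      Kfun_deriv2_eq α hx]
    have hxx : x < 1 - x := by rcases hx with ⟨a, b⟩; linarith
    have : (1 - x) ^ (α - 2) < x ^ (α - 2) :=
      Real.rpow_lt_rpow_of_neg hx.1 hxx (by linarith)
    have hα1 : α * (α - 1) < 0 := by nlinarith
    nlinarith
  · apply key_neg
    intro x hx
    rw [hint] at hx
    rw [Function.iterate_succ, Function.iterate_one, Function.comp_apply,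
      Kfun_deriv2_eq α hx]
    have hxx : x < 1 - x := by rcases hx with ⟨a, b⟩; linarith
    have : (1 - x) ^ (α - 2) < x ^ (α - 2) :=
      Real.rpow_lt_rpow_of_neg hx.1 hxx (by linarith)
    have hα1 : 0 < α * (α - 1) := by nlinarith
    nlinarith
  · apply key_pos
    intro x hx
    rw [hint] at hx
    rw [Function.iterate_succ, Function.iterate_one, Function.comp_apply,
      Kfun_deriv2_eq α hx]
    have hxx : x < 1 - x := by rcases hx with ⟨a, b⟩; linarith
    have : x ^ (α - 2) < (1 - x) ^ (α - 2) :=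
      Real.rpow_lt_rpow hx.1.le hxx (by linarith)
    have hα1 : 0 < α * (α - 1) := by nlinarith
    nlinarith

theorem tsallis_diff_uniform_sign (N : ℕ) (hN : 3 ≤ N) (α : ℝ) (hα : 0 < α) (hα1 : α ≠ 1) :
    (α < 2 → 0 < (2 * (N : ℝ) ^ (α - 1) - (N : ℝ) ^ α - 1 + ((N : ℝ) - 1) ^ α) /
        ((α - 1) * (N : ℝ) ^ (α - 1))) ∧
    (2 < α → (2 * (N : ℝ) ^ (α - 1) - (N : ℝ) ^ α - 1 + ((N : ℝ) - 1) ^ α) /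
        ((α - 1) * (N : ℝ) ^ (α - 1)) < 0) := by
  have hn3 : (3:ℝ) ≤ (N:ℝ) := by exact_mod_cast hN
  have hn0 : (0:ℝ) < (N:ℝ) := by linarith
  set y : ℝ := 1 / (N:ℝ) with hy
  have hymem : y ∈ Set.Ioo (0:ℝ) (1/2) := by
    constructor
    · positivity
    · rw [hy, div_lt_div_iff₀ hn0 (by norm_num)]; linarith
  -- numerator = N^α * Kfun α y
  have hNα : (0:ℝ) < (N:ℝ) ^ α := Real.rpow_pos_of_pos hn0 _
  have hnum : 2 * (N : ℝ) ^ (α - 1) - (N : ℝ) ^ α - 1 + ((N : ℝ) - 1) ^ α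
      = (N:ℝ) ^ α * Kfun α y := by
    have e1 : ((N:ℝ) - 1) = (N:ℝ) * (1 - y) := by
      rw [hy, mul_sub, mul_one, mul_one_div_cancel hn0.ne']
    have e2 : ((N:ℝ) - 1) ^ α = (N:ℝ) ^ α * (1 - y) ^ α := by
      rw [e1, Real.mul_rpow hn0.le (by rw [hy]; rw [sub_nonneg, div_le_one hn0]; linarith)]
    have e3 : (N:ℝ) ^ α * y ^ α = 1 := by
      rw [hy, ← Real.mul_rpow hn0.le (by positivity)]
      rw [mul_one_div, div_self hn0.ne', Real.one_rpow]
    have e4 : (N:ℝ) ^ (α - 1) = (N:ℝ) ^ α * y := by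
      rw [hy, Real.rpow_sub hn0, Real.rpow_one, mul_one_div]
    rw [e2, e4]
    simp only [Kfun]
    linear_combination e3
  have hsign := sign_Kfun α hα hymem
  constructor
  · intro h2
    rcases lt_or_gt_of_ne hα1 with h1 | h1
    · have hK : Kfun α y < 0 := hsign.1 h1
      rw [hnum]
      apply div_pos_of_neg_of_neg
      · nlinarith
      · have : (0:ℝ) < (N:ℝ) ^ (α - 1) := Real.rpow_pos_of_pos hn0 _
        nlinarith
    · have hK : 0 < Kfun α y := hsign.2.1 h1 h2
      rw [hnum]
      apply div_pos
      · nlinarith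
      · have : (0:ℝ) < (N:ℝ) ^ (α - 1) := Real.rpow_pos_of_pos hn0 _
        nlinarith
  · intro h2
    have hK : Kfun α y < 0 := hsign.2.2 h2
    rw [hnum]
    apply div_neg_of_neg_of_pos
    · nlinarith
    · have : (0:ℝ) < (N:ℝ) ^ (α - 1) := Real.rpow_pos_of_pos hn0 _
      nlinarith
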